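/- Let (V, ⟨−,−⟩, s) be a Serre lattice over ℚ of surface* type. Suppose G² ⊆ G¹ ⊆ V are subspaces with (s − 1)(V) ⊆ G¹, (s − 1)(G¹) ⊆ G², (s − 1)(G²) = 0, dim(V/G¹) = 1 and dim G² = 1. Then G¹ = ker((s−1)²) and G² = im((s−1)²). -/

import Mathlib

/-- uniqueness of the codimension filtration on a Serre lattice over ℚ of
surface* type. -/
theorem codimension_filtration_unique (V : Type*) [AddCommGroup V] [Module ℚ V]
    [FiniteDimensional ℚ V]
    (B : V →ₗ[ℚ] V →ₗ[ℚ] ℚ) (hB : ∀ v, (∀ w, B v w = 0) → v = 0)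
    (s : V →ₗ[ℚ] V) (hbij : Function.Bijective s)
    (hserre : ∀ v w, B v (s w) = B w v)
    (huni : (s - 1) ^ Module.finrank ℚ V = 0)
    (hrank : Module.finrank ℚ (LinearMap.range (s - 1)) ≤ 2)
    (hstar : (s - 1) ^ 2 ≠ 0)
    (G1 G2 : Submodule ℚ V) (hG : G2 ≤ G1)
    (h1 : LinearMap.range (s - 1) ≤ G1)
    (h2 : Submodule.map (s - 1) G1 ≤ G2)
    (h3 : Submodule.map (s - 1) G2 = ⊥)
    (h4 : Module.finrank ℚ (V ⧸ G1) = 1)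
    (h5 : Module.finrank ℚ G2 = 1) :
    G1 = LinearMap.ker ((s - 1) ^ 2) ∧ G2 = LinearMap.range ((s - 1) ^ 2) := by
  have hNG2 : ∀ x ∈ G2, (s - 1) x = 0 := by
    intro x hx
    have : (s - 1) x ∈ Submodule.map (s - 1) G2 := Submodule.mem_map_of_mem hx
    rw [h3] at this
    simpa using this
  -- G1 ⊆ ker (s-1)^2
  have hker : G1 ≤ LinearMap.ker ((s - 1) ^ 2) := by
    intro x hx
    have hx2 : (s - 1) x ∈ G2 := h2 (Submodule.mem_map_of_mem hx)
    simp only [LinearMap.mem_ker, pow_two, Module.End.mul_apply]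
    exact hNG2 _ hx2
  -- range (s-1)^2 ⊆ G2
  have hrange : LinearMap.range ((s - 1) ^ 2) ≤ G2 := by
    rintro _ ⟨x, rfl⟩
    simp only [pow_two, Module.End.mul_apply]
    exact h2 (Submodule.mem_map_of_mem (h1 ⟨x, rfl⟩))
  -- finrank G1 = finrank V - 1
  have hq := Submodule.finrank_quotient_add_finrank G1
  rw [h4] at hq
  -- ker (s-1)^2 ≠ ⊤
  have hkt : LinearMap.ker ((s - 1) ^ 2) ≠ ⊤ := by
    intro h
    apply hstar
    ext x
    have : x ∈ LinearMap.ker ((s - 1) ^ 2) := h ▸ Submodule.mem_top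
    simpa using this
  have hklt : Module.finrank ℚ (LinearMap.ker ((s - 1) ^ 2)) < Module.finrank ℚ V :=
    Submodule.finrank_lt hkt
  have hG1eq : G1 = LinearMap.ker ((s - 1) ^ 2) := by
    apply Submodule.eq_of_le_of_finrank_le hker
    omega
  refine ⟨hG1eq, ?_⟩
  -- range (s-1)^2 ≠ ⊥
  have hrne : LinearMap.range ((s - 1) ^ 2) ≠ ⊥ := by
    intro h
    apply hstar
    ext x
    have : ((s - 1) ^ 2 : V →ₗ[ℚ] V) x ∈ LinearMap.range ((s - 1) ^ 2) :=
      LinearMap.mem_range_self _ x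
    rw [h] at this
    simpa using this
  have hrpos : 0 < Module.finrank ℚ (LinearMap.range ((s - 1) ^ 2)) := by
    rw [Module.finrank_pos_iff]
    exact Submodule.nontrivial_iff_ne_bot.mpr hrne
  exact (Submodule.eq_of_le_of_finrank_le hrange (by omega)).symm
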